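/- Fix c ∈ ℝ^d and λ > 0, and define g(w) = E_{x∼φ(·;w)}[c·x] + λ H(w), where H(w) = E_{x∼φ(·;w)}[log φ(x;w)]. Then for every w ∈ ℝ^d, ∇g(w)·(c + λw) = Var_{x∼φ(·;w)}[(c + λw)·x]. -/

import Mathlib

open Finset
open scoped InnerProductSpace BigOperators

noncomputable section

/-- The Gibbs distribution on a finite set `X ⊆ ℝ^d` with parameter `w`:
`φ(x; w) = exp(w·x) / ∑_{y ∈ X} exp(w·y)`. -/
def gibbs {d : ℕ} (X : Finset (EuclideanSpace ℝ (Fin d)))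
    (w x : EuclideanSpace ℝ (Fin d)) : ℝ :=
  Real.exp ⟪w, x⟫_ℝ / ∑ y ∈ X, Real.exp ⟪w, y⟫_ℝ

/-- Expectation of a real function under the Gibbs distribution. -/
def gibbsExp {d : ℕ} (X : Finset (EuclideanSpace ℝ (Fin d)))
    (w : EuclideanSpace ℝ (Fin d)) (f : EuclideanSpace ℝ (Fin d) → ℝ) : ℝ :=
  ∑ x ∈ X, gibbs X w x * f x

/-- Variance of a real function under the Gibbs distribution. -/
def gibbsVar {d : ℕ} (X : Finset (EuclideanSpace ℝ (Fin d)))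
    (w : EuclideanSpace ℝ (Fin d)) (f : EuclideanSpace ℝ (Fin d) → ℝ) : ℝ :=
  gibbsExp X w (fun x => f x ^ 2) - (gibbsExp X w f) ^ 2

/-- Mean (a vector) of the Gibbs distribution. -/
def gibbsMean {d : ℕ} (X : Finset (EuclideanSpace ℝ (Fin d)))
    (w : EuclideanSpace ℝ (Fin d)) : EuclideanSpace ℝ (Fin d) :=
  ∑ x ∈ X, gibbs X w x • x

/-- The negative entropy `H(w) = E_{x ∼ φ(·;w)}[log φ(x;w)]`. -/
def negEnt {d : ℕ} (X : Finset (EuclideanSpace ℝ (Fin d)))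
    (w : EuclideanSpace ℝ (Fin d)) : ℝ :=
  ∑ x ∈ X, gibbs X w x * Real.log (gibbs X w x)


set_option maxHeartbeats 2000000 in
/-- For `g(w) = E_{x∼φ(·;w)}[c·x] + λ H(w)`, for every `w`,
`∇g(w)·(c + λw) = Var_{x∼φ(·;w)}[(c + λw)·x]`. -/
theorem gradient_entropy_regularized_correlation {d : ℕ} (hd : 1 ≤ d)
    (X : Finset (EuclideanSpace ℝ (Fin d))) (hX : X.Nonempty)
    (D : ℝ) (hD : ∀ x ∈ X, ‖x‖ ≤ D)
    (c : EuclideanSpace ℝ (Fin d)) (lam : ℝ) (hlam : 0 < lam) :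
    ∀ w : EuclideanSpace ℝ (Fin d),
      ⟪gradient (fun w => gibbsExp X w (fun x => ⟪c, x⟫_ℝ) + lam * negEnt X w) w,
          c + lam • w⟫_ℝ
        = gibbsVar X w (fun x => ⟪c + lam • w, x⟫_ℝ) := by
  intro w
  set F : EuclideanSpace ℝ (Fin d) → ℝ := fun u => ∑ x ∈ X, Real.exp ⟪u, x⟫_ℝ with hFdef
  set A : EuclideanSpace ℝ (Fin d) → ℝ := fun u => ∑ x ∈ X, (⟪c, x⟫_ℝ + lam * ⟪u, x⟫_ℝ) * Real.exp ⟪u, x⟫_ℝ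
    with hAdef
  have hFpos : ∀ u, 0 < F u := fun u => Finset.sum_pos (fun x _ => Real.exp_pos _) hX
  have hFne : ∀ u, F u ≠ 0 := fun u => ne_of_gt (hFpos u)
  -- rewrite the objective
  have key : (fun w => gibbsExp X w (fun x => ⟪c, x⟫_ℝ) + lam * negEnt X w)
      = fun u => A u / F u - lam * Real.log (F u) := by
    funext u
    have hsum1 : ∑ x ∈ X, Real.exp ⟪u, x⟫_ℝ / F u = 1 := by
      rw [← Finset.sum_div]; exact div_self (hFne u)
    have h1 : negEnt X u
        = (∑ x ∈ X, ⟪u, x⟫_ℝ * Real.exp ⟪u, x⟫_ℝ) / F u - Real.log (F u) := by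
      unfold negEnt
      have hterm : ∀ x ∈ X, gibbs X u x * Real.log (gibbs X u x)
          = ⟪u, x⟫_ℝ * Real.exp ⟪u, x⟫_ℝ / F u
            - Real.log (F u) * (Real.exp ⟪u, x⟫_ℝ / F u) := by
        intro x _
        rw [gibbs, Real.log_div (Real.exp_ne_zero _) (hFne u), Real.log_exp]
        ring
      rw [Finset.sum_congr rfl hterm, Finset.sum_sub_distrib, ← Finset.sum_div,
        ← Finset.mul_sum, hsum1, mul_one]
    have h2 : gibbsExp X u (fun x => ⟪c, x⟫_ℝ)
        = (∑ x ∈ X, ⟪c, x⟫_ℝ * Real.exp ⟪u, x⟫_ℝ) / F u := by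
      unfold gibbsExp
      rw [Finset.sum_div]
      refine Finset.sum_congr rfl fun x _ => ?_
      simp only [gibbs]; ring
    have hA : A u = (∑ x ∈ X, ⟪c, x⟫_ℝ * Real.exp ⟪u, x⟫_ℝ)
        + lam * ∑ x ∈ X, ⟪u, x⟫_ℝ * Real.exp ⟪u, x⟫_ℝ := by
      rw [hAdef]
      simp only [add_mul, Finset.sum_add_distrib, Finset.mul_sum, mul_assoc]
    rw [h1, h2, hA, add_div]
    ring
  -- derivatives
  have hinner : ∀ x : EuclideanSpace ℝ (Fin d), HasFDerivAt (fun u : EuclideanSpace ℝ (Fin d) => ⟪u, x⟫_ℝ) (innerSL ℝ x) w := by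
    intro x
    have h : (fun u : EuclideanSpace ℝ (Fin d) => ⟪u, x⟫_ℝ) = fun u => (innerSL ℝ x) u := by
      funext u; rw [innerSL_apply_apply]; exact real_inner_comm x u
    rw [h]; exact (innerSL ℝ x).hasFDerivAt
  have hF' : HasFDerivAt F
      (∑ x ∈ X, Real.exp ⟪w, x⟫_ℝ • (innerSL ℝ x : EuclideanSpace ℝ (Fin d) →L[ℝ] ℝ)) w :=
    HasFDerivAt.fun_sum fun x _ => (hinner x).exp
  have hA' : HasFDerivAt A
      (∑ x ∈ X, ((⟪c, x⟫_ℝ + lam * ⟪w, x⟫_ℝ) • (Real.exp ⟪w, x⟫_ℝ • (innerSL ℝ x : EuclideanSpace ℝ (Fin d) →L[ℝ] ℝ))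
        + Real.exp ⟪w, x⟫_ℝ • (lam • (innerSL ℝ x : EuclideanSpace ℝ (Fin d) →L[ℝ] ℝ)))) w :=
    HasFDerivAt.fun_sum fun x _ =>
      ((((hinner x).const_mul lam).const_add ⟪c, x⟫_ℝ).fun_mul ((hinner x).exp))
  have hInv : HasFDerivAt (fun u => (F u)⁻¹)
      ((-(F w ^ 2)⁻¹) • (∑ x ∈ X, Real.exp ⟪w, x⟫_ℝ • (innerSL ℝ x : EuclideanSpace ℝ (Fin d) →L[ℝ] ℝ))) w := by
    have := (hasDerivAt_inv (hFne w)).comp_hasFDerivAt w hF'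
    simpa [Function.comp_def] using this
  have hlog : HasFDerivAt (fun u => Real.log (F u))
      ((F w)⁻¹ • (∑ x ∈ X, Real.exp ⟪w, x⟫_ℝ • (innerSL ℝ x : EuclideanSpace ℝ (Fin d) →L[ℝ] ℝ))) w :=
    hF'.log (hFne w)
  have hg : HasFDerivAt (fun u => A u / F u - lam * Real.log (F u))
      ((A w • ((-(F w ^ 2)⁻¹) • (∑ x ∈ X, Real.exp ⟪w, x⟫_ℝ • (innerSL ℝ x : EuclideanSpace ℝ (Fin d) →L[ℝ] ℝ)))
          + (F w)⁻¹ • (∑ x ∈ X, ((⟪c, x⟫_ℝ + lam * ⟪w, x⟫_ℝ)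
              • (Real.exp ⟪w, x⟫_ℝ • (innerSL ℝ x : EuclideanSpace ℝ (Fin d) →L[ℝ] ℝ))
            + Real.exp ⟪w, x⟫_ℝ • (lam • (innerSL ℝ x : EuclideanSpace ℝ (Fin d) →L[ℝ] ℝ)))))
        - lam • ((F w)⁻¹ • (∑ x ∈ X, Real.exp ⟪w, x⟫_ℝ • (innerSL ℝ x : EuclideanSpace ℝ (Fin d) →L[ℝ] ℝ)))) w := by
    have := (hA'.fun_mul hInv).fun_sub (hlog.const_mul lam)
    simpa [div_eq_mul_inv] using this
  rw [key]
  have hgrad := hasFDerivAt_iff_hasGradientAt.mp hg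
  rw [hgrad.gradient, InnerProductSpace.toDual_symm_apply]
  -- now evaluate the linear map
  set s : EuclideanSpace ℝ (Fin d) → ℝ := fun x => ⟪c, x⟫_ℝ + lam * ⟪w, x⟫_ℝ with hsdef
  have hs : ∀ x : EuclideanSpace ℝ (Fin d), ⟪c + lam • w, x⟫_ℝ = s x := by
    intro x; simp only [hsdef]; rw [inner_add_left, real_inner_smul_left]
  have hs' : ∀ x : EuclideanSpace ℝ (Fin d), ⟪x, c + lam • w⟫_ℝ = s x := by
    intro x; rw [real_inner_comm]; exact hs x
  simp only [ContinuousLinearMap.add_apply, ContinuousLinearMap.sub_apply,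
    ContinuousLinearMap.smul_apply, ContinuousLinearMap.coe_sum', Finset.sum_apply,
    innerSL_apply_apply, smul_eq_mul, hs']
  have hAw : A w = ∑ x ∈ X, Real.exp ⟪w, x⟫_ℝ * s x := by
    rw [hAdef]; exact Finset.sum_congr rfl fun x _ => by rw [hsdef]; ring
  have hsum2 : ∑ x ∈ X, ((⟪c, x⟫_ℝ + lam * ⟪w, x⟫_ℝ) * (Real.exp ⟪w, x⟫_ℝ * s x)
      + Real.exp ⟪w, x⟫_ℝ * (lam * s x))
      = (∑ x ∈ X, Real.exp ⟪w, x⟫_ℝ * s x ^ 2)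
        + lam * ∑ x ∈ X, Real.exp ⟪w, x⟫_ℝ * s x := by
    rw [Finset.sum_add_distrib, Finset.mul_sum]
    congr 1
    · exact Finset.sum_congr rfl fun x _ => by rw [hsdef]; ring
    · exact Finset.sum_congr rfl fun x _ => by ring
  have hVar : gibbsVar X w (fun x => ⟪c + lam • w, x⟫_ℝ)
      = (∑ x ∈ X, Real.exp ⟪w, x⟫_ℝ * s x ^ 2) / F w
        - ((∑ x ∈ X, Real.exp ⟪w, x⟫_ℝ * s x) / F w) ^ 2 := by
    unfold gibbsVar gibbsExp gibbs
    rw [Finset.sum_div, Finset.sum_div]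
    congr 1
    · refine Finset.sum_congr rfl fun x _ => ?_
      simp only [hFdef, hs x]; ring
    · refine congrArg (· ^ 2) (Finset.sum_congr rfl fun x _ => ?_)
      simp only [hFdef, hs x]; ring
  rw [hAw, hsum2, hVar]
  field_simp
  ring


end
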